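/- (Per-episode fairness regret bound.) Let N ≥ 1, let γ > 0 and L > 0, and let g : ℝ → ℝ satisfy g(x) ≥ γ for all x and |g(x) − g(y)| ≤ L|x − y| for all x, y. For any μ, μ* : {1,…,N} → ℝ, define π_i = g(μ_i)/Σ_{j=1}^N g(μ_j) and π*_i = g(μ*_i)/Σ_{j=1}^N g(μ*_j). Then Σ_{i=1}^N |π_i − π*_i| ≤ (2/(Nγ)) Σ_{i=1}^N |g(μ_i) − g(μ*_i)| ≤ (2L/(Nγ)) Σ_{i=1}^N |μ_i − μ*_i|. -/

import Mathlib

/-- per-episode fairness regret bound. -/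
theorem per_episode_fairness_regret
    (N : ℕ) (hN : 1 ≤ N) (γ L : ℝ) (hγ : 0 < γ) (hL : 0 < L)
    (g : ℝ → ℝ) (hg : ∀ x : ℝ, γ ≤ g x)
    (hLip : ∀ x y : ℝ, |g x - g y| ≤ L * |x - y|)
    (μ μs : Fin N → ℝ) :
    (∑ i, |g (μ i) / (∑ j, g (μ j)) - g (μs i) / (∑ j, g (μs j))|) ≤
      (2 / (N * γ)) * ∑ i, |g (μ i) - g (μs i)| ∧
    (2 / (N * γ)) * (∑ i, |g (μ i) - g (μs i)|) ≤
      (2 * L / (N * γ)) * ∑ i, |μ i - μs i| := by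
  set S := ∑ j, g (μ j) with hSdef
  set T := ∑ j, g (μs j) with hTdef
  have hN0 : (0:ℝ) < N := by exact_mod_cast hN
  have hNγ : 0 < (N:ℝ) * γ := mul_pos hN0 hγ
  have hS : (N:ℝ) * γ ≤ S := by
    have h1 : ∑ _j : Fin N, γ ≤ S := Finset.sum_le_sum fun i _ => hg _
    simpa [Finset.sum_const, Finset.card_univ, mul_comm] using h1
  have hT : (N:ℝ) * γ ≤ T := by
    have h1 : ∑ _j : Fin N, γ ≤ T := Finset.sum_le_sum fun i _ => hg _
    simpa [Finset.sum_const, Finset.card_univ, mul_comm] using h1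
  have hS0 : 0 < S := lt_of_lt_of_le hNγ hS
  have hT0 : 0 < T := lt_of_lt_of_le hNγ hT
  set D := ∑ i, |g (μ i) - g (μs i)| with hDdef
  have hD0 : 0 ≤ D := Finset.sum_nonneg fun i _ => abs_nonneg _
  have hST : |S - T| ≤ D := by
    have h1 := Finset.abs_sum_le_sum_abs (fun i => g (μ i) - g (μs i)) Finset.univ
    simpa [Finset.sum_sub_distrib] using h1
  constructor
  · have key : ∀ i : Fin N, |g (μ i) / S - g (μs i) / T| ≤
        |g (μ i) - g (μs i)| / S + g (μs i) * (|S - T| / (S * T)) := by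
      intro i
      have hid : g (μ i) / S - g (μs i) / T =
          (g (μ i) - g (μs i)) / S + g (μs i) * ((T - S) / (S * T)) := by
        field_simp; ring
      rw [hid]
      refine (abs_add_le _ _).trans ?_
      have h1 : |(g (μ i) - g (μs i)) / S| = |g (μ i) - g (μs i)| / S := by
        rw [abs_div, abs_of_pos hS0]
      have h2 : |g (μs i) * ((T - S) / (S * T))| = g (μs i) * (|S - T| / (S * T)) := by
        rw [abs_mul, abs_div, abs_of_pos (mul_pos hS0 hT0),
          abs_of_pos (lt_of_lt_of_le hγ (hg _)), abs_sub_comm]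
      rw [h1, h2]
    calc (∑ i, |g (μ i) / S - g (μs i) / T|)
        ≤ ∑ i, (|g (μ i) - g (μs i)| / S + g (μs i) * (|S - T| / (S * T))) :=
          Finset.sum_le_sum fun i _ => key i
      _ = D / S + T * (|S - T| / (S * T)) := by
          rw [Finset.sum_add_distrib, ← Finset.sum_div, ← Finset.sum_mul]
      _ = D / S + |S - T| / S := by
          congr 1
          field_simp
      _ ≤ D / S + D / S := by gcongr
      _ = 2 * D / S := by ring
      _ ≤ 2 * D / ((N:ℝ) * γ) := by gcongr
      _ = 2 / ((N:ℝ) * γ) * D := by ring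
  · have hLipSum : D ≤ L * ∑ i, |μ i - μs i| := by
      rw [Finset.mul_sum]
      exact Finset.sum_le_sum fun i _ => hLip _ _
    have h2 : (2:ℝ) * L / ((N:ℝ) * γ) * ∑ i, |μ i - μs i| =
        2 / ((N:ℝ) * γ) * (L * ∑ i, |μ i - μs i|) := by ring
    rw [h2]
    exact mul_le_mul_of_nonneg_left hLipSum (by positivity)
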